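/- arXiv:1904.11155 — 5 statements merged into one kernel-verified Lean document; each statement's English description precedes it below -/
import Mathlib

section
/- For a Hessenberg function h : [n] → [n] and the set S_n^h = {w ∈ S_n : w⁻¹(w(j) − 1) ≤ h(j) for all j ∈ [n]} (with the convention w⁻¹(w(j)−1) = 0 when w(j) = 1), the sum of q^{ℓ_h(w)} over w ∈ S_n^h equals the product over j = 1 to n of (1 + q + q² + ... + q^{h(j)−j}), where ℓ_h(w) = #{(j,i) : 1 ≤ j < i ≤ n, w(j) > w(i), i ≤ h(j)}. -/
open Finset Polynomial

/-- `ℓ_h(w) = #{(j,i) : j < i, w j > w i, i ≤ h j}` (0-indexed). -/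
def hessLength {n : ℕ} (h : Fin n → Fin n) (w : Equiv.Perm (Fin n)) : ℕ :=
  (Finset.univ.filter fun p : Fin n × Fin n =>
    p.1 < p.2 ∧ w p.2 < w p.1 ∧ p.2 ≤ h p.1).card

/-- Membership in `S_n^h`: `w⁻¹(w(j) − 1) ≤ h(j)` for all `j`, with the convention that
the condition holds when `w j` is the smallest value. -/
def memSnh {n : ℕ} [NeZero n] (h : Fin n → Fin n) (w : Equiv.Perm (Fin n)) : Prop :=
  ∀ j : Fin n, w j = 0 ∨ w.symm (w j - 1) ≤ h j

instance {n : ℕ} [NeZero n] (h : Fin n → Fin n) : DecidablePred (memSnh h) := fun w =>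
  decidable_of_iff (∀ j : Fin n, w j = 0 ∨ w.symm (w j - 1) ≤ h j) Iff.rfl

namespace HessAux

lemma succAbove_val {n : ℕ} (a : Fin (n+1)) (v : Fin n) :
    ((a.succAbove v : Fin (n+1)) : ℕ) = if (v:ℕ) < (a:ℕ) then (v:ℕ) else (v:ℕ)+1 := by
  unfold Fin.succAbove
  split <;> split_ifs <;> simp_all [Fin.lt_iff_val_lt_val]

def insertPerm {n : ℕ} (a : Fin (n+1)) (w' : Equiv.Perm (Fin n)) : Equiv.Perm (Fin (n+1)) :=
  (finSuccEquiv n).trans ((Equiv.optionCongr w').trans (finSuccEquiv' a).symm)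

@[simp] lemma insertPerm_zero {n : ℕ} (a : Fin (n+1)) (w' : Equiv.Perm (Fin n)) :
    insertPerm a w' 0 = a := by
  simp [insertPerm]

@[simp] lemma insertPerm_succ {n : ℕ} (a : Fin (n+1)) (w' : Equiv.Perm (Fin n)) (i : Fin n) :
    insertPerm a w' i.succ = a.succAbove (w' i) := by
  simp [insertPerm]

@[simp] lemma insertPerm_symm_self {n : ℕ} (a : Fin (n+1)) (w' : Equiv.Perm (Fin n)) :
    (insertPerm a w').symm a = 0 := by
  rw [Equiv.symm_apply_eq]; simp

@[simp] lemma insertPerm_symm_succAbove {n : ℕ} (a : Fin (n+1)) (w' : Equiv.Perm (Fin n))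
    (v : Fin n) : (insertPerm a w').symm (a.succAbove v) = (w'.symm v).succ := by
  rw [Equiv.symm_apply_eq]; simp

def removePerm {n : ℕ} (w : Equiv.Perm (Fin (n+1))) : Equiv.Perm (Fin n) :=
  Equiv.removeNone ((finSuccEquiv n).symm.trans (w.trans (finSuccEquiv' (w 0))))

lemma removePerm_spec {n : ℕ} (w : Equiv.Perm (Fin (n+1))) (i : Fin n) :
    (w 0).succAbove (removePerm w i) = w i.succ := by
  obtain ⟨v, hv⟩ := Fin.exists_succAbove_eq (x := w i.succ) (y := w 0)
    (w.injective.ne (Fin.succ_ne_zero i))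
  have he : ((finSuccEquiv n).symm.trans (w.trans (finSuccEquiv' (w 0)))) (some i) = some v := by
    simp [← hv]
  have := Equiv.removeNone_some _ ⟨v, he⟩
  rw [he] at this
  have : removePerm w i = v := by
    simpa [removePerm] using (Option.some_injective _ this.symm).symm
  rw [this, hv]

lemma insert_remove {n : ℕ} (w : Equiv.Perm (Fin (n+1))) :
    insertPerm (w 0) (removePerm w) = w := by
  ext j
  induction j using Fin.cases with
  | zero => simp
  | succ i => simp [removePerm_spec]

@[simp] lemma remove_insert {n : ℕ} (a : Fin (n+1)) (w' : Equiv.Perm (Fin n)) :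
    removePerm (insertPerm a w') = w' := by
  ext i
  have h0 : insertPerm a w' 0 = a := insertPerm_zero a w'
  have := removePerm_spec (insertPerm a w') i
  rw [insertPerm_succ, h0] at this
  exact congrArg Fin.val (Fin.succAbove_right_injective this)


def hDrop {n : ℕ} (h : Fin (n+2) → Fin (n+2)) (j : Fin (n+1)) : Fin (n+1) :=
  ⟨(h j.succ : ℕ) - 1, by have := (h j.succ).isLt; omega⟩

def cfun {n : ℕ} (m : ℕ) (a : Fin (n+1)) (w' : Equiv.Perm (Fin n)) : ℕ :=
  (Finset.univ.filter (fun i : Fin n => (i:ℕ) < m ∧ ((w' i : Fin n):ℕ) < (a:ℕ))).card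

def acond {n : ℕ} (m : ℕ) (a : Fin (n+2)) (w' : Equiv.Perm (Fin (n+1))) : Prop :=
  (a:ℕ) = 0 ∨ ∃ p : Fin (n+1), (p:ℕ) < m ∧ ((w' p : Fin (n+1)):ℕ) + 1 = (a:ℕ)

instance {n m : ℕ} (w' : Equiv.Perm (Fin (n+1))) : DecidablePred (fun a => acond m a w') :=
  fun _ => by unfold acond; infer_instance


lemma succAbove_eq_zero_iff {n : ℕ} (a : Fin (n+2)) (v : Fin (n+1)) :
    a.succAbove v = 0 ↔ ((v:ℕ) = 0 ∧ (a:ℕ) ≠ 0) := by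
  rw [Fin.ext_iff, Fin.val_zero, succAbove_val]
  split_ifs with hc
  · omega
  · rw [false_iff]; omega

lemma succAbove_sub_one {n : ℕ} (a : Fin (n+2)) (v : Fin (n+1))
    (hva : (v:ℕ) ≠ (a:ℕ)) (hv0 : (v:ℕ) ≠ 0) :
    a.succAbove v - 1 = a.succAbove (v - 1) := by
  have h1 : ((v - 1 : Fin (n+1)):ℕ) = (v:ℕ) - 1 := by
    rw [Fin.coe_sub_one, if_neg (fun hh => hv0 (by rw [hh]; rfl))]
  have h2 : a.succAbove v ≠ 0 := by
    rw [Ne, succAbove_eq_zero_iff]; tauto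
  apply Fin.ext
  rw [Fin.coe_sub_one, if_neg h2, succAbove_val, succAbove_val, h1]
  have hvlt := v.isLt
  split_ifs <;> omega


lemma sumA {α β : Type*} [DecidableEq α] [LinearOrder β] (g : α → β)
    (hg : Function.Injective g) (S : Finset α) :
    ∑ p ∈ S, (X : ℤ[X]) ^ (S.filter (fun i => g i ≤ g p)).card
      = ∑ k ∈ Finset.range S.card, (X : ℤ[X]) ^ (k + 1) := by
  induction S using Finset.strongInduction with
  | _ S IH =>
    rcases S.eq_empty_or_nonempty with rfl | hne
    · simp
    obtain ⟨p₀, hp₀S, hmax⟩ := S.exists_max_image g hne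
    obtain ⟨c, hc⟩ : ∃ c, S.card = c + 1 :=
      ⟨S.card - 1, by have := Finset.card_pos.2 hne; omega⟩
    have herase : (S.erase p₀).card = c := by
      rw [Finset.card_erase_of_mem hp₀S]; omega
    have h1 : (S.filter (fun i => g i ≤ g p₀)).card = S.card := by
      rw [Finset.filter_true_of_mem (fun i hi => hmax i hi)]
    have key : ∀ p ∈ S.erase p₀,
        (S.filter (fun i => g i ≤ g p)).card = ((S.erase p₀).filter (fun i => g i ≤ g p)).card := by
      intro p hp
      congr 1
      ext i
      simp only [Finset.mem_filter, Finset.mem_erase]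
      constructor
      · rintro ⟨hi, hle⟩
        refine ⟨⟨fun he => ?_, hi⟩, hle⟩
        subst he
        obtain ⟨hne', hpS⟩ := Finset.mem_erase.1 hp
        exact hne' (hg (le_antisymm (hmax p hpS) hle))
      · rintro ⟨⟨_, hi⟩, hle⟩; exact ⟨hi, hle⟩
    rw [← Finset.add_sum_erase _ _ hp₀S, h1,
      Finset.sum_congr rfl (fun p hp => by rw [key p hp]),
      IH (S.erase p₀) (Finset.erase_ssubset hp₀S), herase, hc,
      Finset.sum_range_succ]
    ring

lemma card_filter_lt (n m : ℕ) (hm : m ≤ n+1) :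
    ((univ : Finset (Fin (n+1))).filter (fun p => ((p : Fin (n+1)):ℕ) < m)).card = m := by
  have key : ((univ : Finset (Fin (n+1))).filter (fun p => ((p : Fin (n+1)):ℕ) < m)).card
      = (Finset.range m).card := by
    apply Finset.card_nbij' (i := fun p => ((p : Fin (n+1)):ℕ))
      (j := fun k => (⟨min k n, by omega⟩ : Fin (n+1)))
    · intro a ha; rw [Finset.mem_coe, mem_filter] at ha; exact Finset.mem_range.2 ha.2
    · intro k hk; rw [Finset.mem_coe, Finset.mem_range] at hk
      rw [Finset.mem_coe, mem_filter]; refine ⟨mem_univ _, ?_⟩; show min k n < m; omega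
    · intro a ha; have := a.isLt
      exact Fin.ext (show min (a:ℕ) n = (a:ℕ) by omega)
    · intro k hk; rw [Finset.mem_coe, Finset.mem_range] at hk; show min k n = k; omega
  rw [key, Finset.card_range]


lemma hessLength_insert {n : ℕ} (h : Fin (n+2) → Fin (n+2)) (hge : ∀ j, j ≤ h j)
    (a : Fin (n+2)) (w' : Equiv.Perm (Fin (n+1))) :
    hessLength h (insertPerm a w')
      = cfun (h 0 : ℕ) a w' + hessLength (hDrop h) w' := by
  set w := insertPerm a w' with hw
  rw [hessLength, Finset.card_filter, Fintype.sum_prod_type, Fin.sum_univ_succ]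
  congr 1
  · rw [Fin.sum_univ_succ, cfun, Finset.card_filter]
    have t0 : (if (0:Fin (n+2)) < 0 ∧ w 0 < w 0 ∧ (0:Fin (n+2)) ≤ h 0 then 1 else 0) = 0 := by
      simp
    rw [t0, zero_add]
    refine Finset.sum_congr rfl fun i _ => if_congr ?_ rfl rfl
    show ((0:Fin (n+2)) < i.succ ∧ w i.succ < w 0 ∧ i.succ ≤ h 0)
      ↔ ((i:ℕ) < ((h 0 : Fin (n+2)):ℕ) ∧ ((w' i : Fin (n+1)):ℕ) < (a:ℕ))
    rw [hw, insertPerm_succ, insertPerm_zero]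
    have key : (a.succAbove (w' i) < a) ↔ ((w' i:ℕ) < (a:ℕ)) := by
      rw [Fin.lt_iff_val_lt_val, succAbove_val]; split_ifs with hc <;> omega
    have keyle : (i.succ ≤ h 0) ↔ ((i:ℕ) < ((h 0):ℕ)) := by
      rw [Fin.le_iff_val_le_val, Fin.val_succ]; omega
    rw [key, keyle]
    exact ⟨fun ⟨_, h2, h3⟩ => ⟨h3, h2⟩, fun ⟨h1, h2⟩ => ⟨Fin.succ_pos i, h2, h1⟩⟩
  · rw [hessLength, Finset.card_filter, Fintype.sum_prod_type]
    refine Finset.sum_congr rfl fun j _ => ?_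
    rw [Fin.sum_univ_succ]
    have t0 : (if j.succ < 0 ∧ w 0 < w j.succ ∧ (0:Fin (n+2)) ≤ h j.succ then 1 else 0) = 0 := by
      simp [Fin.not_lt_zero]
    rw [t0, zero_add]
    refine Finset.sum_congr rfl fun i _ => if_congr ?_ rfl rfl
    show (j.succ < i.succ ∧ w i.succ < w j.succ ∧ i.succ ≤ h j.succ)
      ↔ (j < i ∧ w' i < w' j ∧ i ≤ hDrop h j)
    rw [hw, insertPerm_succ, insertPerm_succ]
    have keyle : (i.succ ≤ h j.succ) ↔ (i ≤ hDrop h j) := by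
      have hs := hge j.succ
      rw [Fin.le_iff_val_le_val] at hs
      rw [Fin.le_iff_val_le_val, Fin.le_iff_val_le_val, Fin.val_succ]
      show _ ↔ (i:ℕ) ≤ (h j.succ : ℕ) - 1
      rw [Fin.val_succ] at hs
      omega
    rw [Fin.succ_lt_succ_iff, Fin.succAbove_lt_succAbove_iff, keyle]

lemma sum_acond {n : ℕ} (m : ℕ) (hm : m ≤ n+1) (w' : Equiv.Perm (Fin (n+1))) :
    ∑ a ∈ univ.filter (fun a : Fin (n+2) => acond m a w'), (X : ℤ[X]) ^ cfun m a w'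
      = ∑ k ∈ Finset.range (m+1), (X : ℤ[X]) ^ k := by
  classical
  set S : Finset (Fin (n+1)) := univ.filter (fun p => ((p : Fin (n+1)):ℕ) < m) with hS
  have hset : univ.filter (fun a : Fin (n+2) => acond m a w')
      = insert 0 (S.image (fun p => (w' p).succ)) := by
    ext a
    rw [mem_filter]
    simp only [mem_filter, mem_univ, true_and, mem_insert, mem_image, acond, hS]
    constructor
    · rintro (h0 | ⟨p, hp, hpa⟩)
      · exact Or.inl (Fin.ext (by simpa using h0))
      · exact Or.inr ⟨p, by simpa using hp, Fin.ext (by simpa using hpa)⟩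
    · rintro (rfl | ⟨p, hp, rfl⟩)
      · exact Or.inl rfl
      · exact Or.inr ⟨p, by simpa using hp, by simp⟩
  have h0notmem : (0 : Fin (n+2)) ∉ S.image (fun p => (w' p).succ) := by
    simp only [mem_image, not_exists]
    rintro p ⟨-, hp⟩
    exact absurd hp (Fin.succ_ne_zero _)
  rw [hset, Finset.sum_insert h0notmem]
  have c0 : cfun m (0 : Fin (n+2)) w' = 0 := by
    rw [cfun, Finset.card_eq_zero, Finset.filter_eq_empty_iff]
    intro i _; simp
  rw [c0, Finset.sum_image (fun x _ y _ hxy => w'.injective (Fin.succ_injective _ hxy))]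
  have hcf : ∀ p ∈ S, cfun m ((w' p).succ) w' = (S.filter (fun i => w' i ≤ w' p)).card := by
    intro p _
    rw [cfun, hS, Finset.filter_filter]
    congr 1
    ext i
    simp only [mem_filter, mem_univ, true_and, Fin.val_succ, Fin.le_iff_val_le_val]
    omega
  rw [Finset.sum_congr rfl (fun p hp => by rw [hcf p hp]),
    sumA (fun i => w' i) w'.injective S, hS, card_filter_lt n m hm,
    pow_zero, Finset.sum_range_succ' (fun k => (X:ℤ[X])^k) m]
  ring

lemma memSnh_insert_iff {n : ℕ} (h : Fin (n+2) → Fin (n+2)) (hmono : Monotone h)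
    (hge : ∀ j, j ≤ h j) (a : Fin (n+2)) (w' : Equiv.Perm (Fin (n+1))) :
    memSnh h (insertPerm a w') ↔ (memSnh (hDrop h) w' ∧ acond ((h 0 : Fin (n+2)) : ℕ) a w') := by
  have halt := a.isLt
  constructor
  · intro H
    have hac : acond ((h 0 : Fin (n+2)) : ℕ) a w' := by
      by_cases ha0 : (a:ℕ) = 0
      · exact Or.inl ha0
      right
      rcases H 0 with h0 | h0
      · rw [insertPerm_zero] at h0
        exact absurd (congrArg Fin.val h0) ha0
      rw [insertPerm_zero] at h0
      set v₀ : Fin (n+1) := ⟨(a:ℕ)-1, by omega⟩ with hv₀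
      have hv₀val : (v₀:ℕ) = (a:ℕ) - 1 := rfl
      have ha1 : ((a - 1 : Fin (n+2)):ℕ) = (a:ℕ) - 1 := by
        rw [Fin.coe_sub_one, if_neg (fun hh => ha0 (by rw [hh]; rfl))]
      have hsv : a.succAbove v₀ = a - 1 := by
        apply Fin.ext
        rw [succAbove_val, hv₀val, ha1, if_pos (by omega)]
      rw [← hsv, insertPerm_symm_succAbove, Fin.le_iff_val_le_val, Fin.val_succ] at h0
      refine ⟨w'.symm v₀, by omega, ?_⟩
      rw [Equiv.apply_symm_apply]; simp only [hv₀]; omega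
    refine ⟨?_, hac⟩
    intro i
    by_cases hv0 : ((w' i : Fin (n+1)):ℕ) = 0
    · exact Or.inl (Fin.ext (by simpa using hv0))
    right
    by_cases hva : ((w' i : Fin (n+1)):ℕ) = (a:ℕ)
    · rcases hac with h0 | ⟨p, hp, hpa⟩
      · omega
      have hw'p : w' p = w' i - 1 := by
        apply Fin.ext
        rw [Fin.coe_sub_one, if_neg (fun hh => hv0 (by rw [hh]; rfl))]
        omega
      rw [← hw'p, Equiv.symm_apply_apply]
      have hmono' := hmono (Fin.zero_le i.succ)
      rw [Fin.le_iff_val_le_val] at hmono' ⊢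
      show (p:ℕ) ≤ (h i.succ : ℕ) - 1
      omega
    · have hu := H i.succ
      rw [insertPerm_succ] at hu
      rcases hu with hu0 | hu
      · rw [succAbove_eq_zero_iff] at hu0; omega
      rw [succAbove_sub_one a (w' i) hva hv0, insertPerm_symm_succAbove,
        Fin.le_iff_val_le_val, Fin.val_succ] at hu
      rw [Fin.le_iff_val_le_val]
      show (w'.symm (w' i - 1) : ℕ) ≤ (h i.succ : ℕ) - 1
      omega
  · rintro ⟨H', hac⟩ j
    induction j using Fin.cases with
    | zero =>
      rw [insertPerm_zero]
      rcases hac with h0 | ⟨p, hp, hpa⟩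
      · exact Or.inl (Fin.ext (by simpa using h0))
      right
      have ha0 : (a:ℕ) ≠ 0 := by omega
      have ha1 : ((a - 1 : Fin (n+2)):ℕ) = (a:ℕ) - 1 := by
        rw [Fin.coe_sub_one, if_neg (fun hh => ha0 (by rw [hh]; rfl))]
      have hsv : a.succAbove (w' p) = a - 1 := by
        apply Fin.ext
        rw [succAbove_val, ha1, if_pos (by omega)]
        omega
      rw [← hsv, insertPerm_symm_succAbove, Equiv.symm_apply_apply,
        Fin.le_iff_val_le_val, Fin.val_succ]
      omega
    | succ i =>
      rw [insertPerm_succ]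
      by_cases hva : ((w' i : Fin (n+1)):ℕ) = (a:ℕ)
      · right
        have hs1 : a.succAbove (w' i) - 1 = a := by
          apply Fin.ext
          have hval : ((a.succAbove (w' i) : Fin (n+2)):ℕ) = (w' i:ℕ) + 1 := by
            rw [succAbove_val, if_neg (by omega)]
          rw [Fin.coe_sub_one, if_neg (fun hh => by rw [hh] at hval; simp at hval), hval]
          omega
        rw [hs1, insertPerm_symm_self]
        exact Fin.zero_le _
      · by_cases hv0 : ((w' i : Fin (n+1)):ℕ) = 0
        · left
          rw [succAbove_eq_zero_iff]
          exact ⟨hv0, by omega⟩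
        right
        rcases H' i with h0 | h0
        · exact absurd (congrArg Fin.val h0) hv0
        rw [succAbove_sub_one a (w' i) hva hv0, insertPerm_symm_succAbove,
          Fin.le_iff_val_le_val, Fin.val_succ]
        rw [Fin.le_iff_val_le_val] at h0
        have hh0 : (w'.symm (w' i - 1) : ℕ) ≤ (h i.succ : ℕ) - 1 := h0
        have hgei := hge i.succ
        rw [Fin.le_iff_val_le_val, Fin.val_succ] at hgei
        omega

end HessAux


lemma aux_main (n : ℕ) : ∀ (h : Fin (n+1) → Fin (n+1)), Monotone h → (∀ j, j ≤ h j) →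
    ∑ w ∈ Finset.univ.filter (memSnh h), (X : ℤ[X]) ^ hessLength h w =
      ∏ j : Fin (n+1), ∑ k ∈ Finset.range ((h j : ℕ) - (j : ℕ) + 1), (X : ℤ[X]) ^ k := by
  induction n with
  | zero =>
    intro h _ _
    have hall : ∀ w : Equiv.Perm (Fin (0+1)), memSnh h w := fun w j =>
      Or.inl (Fin.ext (by have := (w j).isLt; simp))
    have hlen : ∀ w : Equiv.Perm (Fin (0+1)), hessLength h w = 0 := by
      intro w
      rw [hessLength, Finset.card_eq_zero, Finset.filter_eq_empty_iff]
      rintro ⟨p1, p2⟩ -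
      simp only [not_and]
      intro hlt
      exfalso
      have h1 := p1.isLt
      have h2 := p2.isLt
      rw [Fin.lt_iff_val_lt_val] at hlt
      omega
    rw [Finset.filter_true_of_mem (fun w _ => hall w)]
    have h00 : ((h 0 : Fin 1) : ℕ) = 0 := by have := (h 0).isLt; omega
    simp [hlen, Finset.card_univ, Fintype.card_perm, Fin.prod_univ_one, h00]
  | succ n IH =>
    intro h hmono hge
    set m : ℕ := ((h 0 : Fin (n+2)) : ℕ) with hm
    have hm' : m ≤ n+1 := by have := (h 0).isLt; omega
    have hdm : Monotone (HessAux.hDrop h) := by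
      intro i j hij
      rw [Fin.le_iff_val_le_val]
      show (h i.succ : ℕ) - 1 ≤ (h j.succ : ℕ) - 1
      have hs : i.succ ≤ j.succ := by
        rw [Fin.le_iff_val_le_val, Fin.val_succ, Fin.val_succ]
        rw [Fin.le_iff_val_le_val] at hij
        omega
      have := hmono hs
      rw [Fin.le_iff_val_le_val] at this
      omega
    have hdge : ∀ j, j ≤ HessAux.hDrop h j := by
      intro j
      rw [Fin.le_iff_val_le_val]
      show (j:ℕ) ≤ (h j.succ : ℕ) - 1
      have := hge j.succ
      rw [Fin.le_iff_val_le_val, Fin.val_succ] at this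
      omega
    have step1 : ∑ w ∈ Finset.univ.filter (memSnh h), (X : ℤ[X]) ^ hessLength h w
        = ∑ p ∈ Finset.univ.filter (fun p : Fin (n+2) × Equiv.Perm (Fin (n+1)) =>
            memSnh (HessAux.hDrop h) p.2 ∧ HessAux.acond m p.1 p.2),
            (X : ℤ[X]) ^ HessAux.cfun m p.1 p.2 * (X : ℤ[X]) ^ hessLength (HessAux.hDrop h) p.2 := by
      refine Finset.sum_nbij' (i := fun w => ((w 0 : Fin (n+2)), HessAux.removePerm w))
        (j := fun p => HessAux.insertPerm p.1 p.2) ?_ ?_ ?_ ?_ ?_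
      · intro w hw
        rw [Finset.mem_filter] at hw ⊢
        refine ⟨Finset.mem_univ _, ?_⟩
        have := (HessAux.memSnh_insert_iff h hmono hge (w 0) (HessAux.removePerm w)).mp
          (by rw [HessAux.insert_remove]; exact hw.2)
        exact this
      · intro p hp
        rw [Finset.mem_filter] at hp ⊢
        exact ⟨Finset.mem_univ _,
          (HessAux.memSnh_insert_iff h hmono hge p.1 p.2).mpr hp.2⟩
      · intro w hw
        exact HessAux.insert_remove w
      · intro p hp
        exact Prod.ext (HessAux.insertPerm_zero p.1 p.2) (HessAux.remove_insert p.1 p.2)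
      · intro w hw
        have e1 := HessAux.hessLength_insert h hge (w 0) (HessAux.removePerm w)
        rw [HessAux.insert_remove] at e1
        rw [e1, pow_add, hm]
    rw [step1,
      Finset.sum_finset_product_right _
        (Finset.univ.filter (memSnh (HessAux.hDrop h)))
        (fun w' => Finset.univ.filter (fun a : Fin (n+2) => HessAux.acond m a w'))
        (by intro p; simp only [Finset.mem_filter, Finset.mem_univ, true_and])]
    have inner : ∀ w' ∈ Finset.univ.filter (memSnh (HessAux.hDrop h)),
        ∑ a ∈ Finset.univ.filter (fun a : Fin (n+2) => HessAux.acond m a w'),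
          (X : ℤ[X]) ^ HessAux.cfun m a w' * (X : ℤ[X]) ^ hessLength (HessAux.hDrop h) w'
        = (∑ k ∈ Finset.range (m+1), (X : ℤ[X]) ^ k) * (X : ℤ[X]) ^ hessLength (HessAux.hDrop h) w' := by
      intro w' _
      rw [← Finset.sum_mul, HessAux.sum_acond m hm' w']
    have rhs : ∏ j : Fin (n+1+1), ∑ k ∈ Finset.range ((h j : ℕ) - (j : ℕ) + 1), (X : ℤ[X]) ^ k
        = (∑ k ∈ Finset.range (((h 0 : Fin (n+2)) : ℕ) + 1), (X : ℤ[X]) ^ k) *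
          ∏ j : Fin (n+1), ∑ k ∈ Finset.range ((HessAux.hDrop h j : ℕ) - (j : ℕ) + 1), (X : ℤ[X]) ^ k := by
      rw [Fin.prod_univ_succ]
      congr 1
      refine Finset.prod_congr rfl fun j _ => ?_
      have h1 : ((HessAux.hDrop h j : Fin (n+1)) : ℕ) = (h j.succ : ℕ) - 1 := rfl
      have h2 : ((j.succ : Fin (n+2)) : ℕ) = (j:ℕ) + 1 := Fin.val_succ j
      have h3 := hge j.succ
      rw [Fin.le_iff_val_le_val, h2] at h3
      rw [h1, h2]
      congr 2
      omega
    rw [Finset.sum_congr rfl inner, ← Finset.mul_sum, IH (HessAux.hDrop h) hdm hdge, rhs, hm]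

/-- `Σ_{w ∈ S_n^h} q^{ℓ_h(w)} = Π_{j=1}^{n} (1 + q + ⋯ + q^{h(j)−j})` in `ℤ[q]`. -/
theorem sum_Snh_q_pow_eq_prod (n : ℕ) [NeZero n] (h : Fin n → Fin n)
    (hmono : Monotone h) (hge : ∀ j, j ≤ h j) :
    ∑ w ∈ Finset.univ.filter (memSnh h), (X : ℤ[X]) ^ hessLength h w =
      ∏ j : Fin n, ∑ k ∈ Finset.range ((h j : ℕ) - (j : ℕ) + 1), (X : ℤ[X]) ^ k := by
  obtain ⟨k, rfl⟩ : ∃ k, n = k + 1 :=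
    ⟨n - 1, by have := Nat.pos_of_ne_zero (NeZero.ne n); omega⟩
  exact aux_main k h hmono hge
end

section
/- For any Hessenberg function h : [n] → [n], the sum of q^{ℓ_h(w)} over all w ∈ S_n is a palindromic polynomial of degree m = Σ_{j=1}^n (h(j) − j); that is, the coefficient of q^k equals the coefficient of q^{m−k} for all k. -/
open Finset Polynomial

namespace HessAux

variable {n : ℕ} (h : Fin n → Fin n)

/-- The pair set. -/
def S : Finset (Fin n × Fin n) :=
  Finset.univ.filter fun p => p.1 < p.2 ∧ p.2 ≤ h p.1

lemma card_S : (S h).card = ∑ j : Fin n, ((h j : ℕ) - (j : ℕ)) := by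
  rw [S, Finset.card_filter, Fintype.sum_prod_type]
  refine Finset.sum_congr rfl fun j _ => ?_
  rw [← Finset.card_filter]
  have : (Finset.univ.filter fun i : Fin n => j < i ∧ i ≤ h j) = Finset.Ioc j (h j) := by
    ext i; simp [Finset.mem_Ioc]
  rw [this, Fin.card_Ioc]

lemma hessLength_eq (w : Equiv.Perm (Fin n)) :
    hessLength h w = ((S h).filter fun p => w p.2 < w p.1).card := by
  rw [hessLength, S, Finset.filter_filter]
  congr 1; ext p; simp; tauto

lemma hessLength_le (w : Equiv.Perm (Fin n)) : hessLength h w ≤ (S h).card := by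
  rw [hessLength_eq]; exact Finset.card_filter_le _ _

lemma key (w : Equiv.Perm (Fin n)) :
    hessLength h (Fin.revPerm * w) = (S h).card - hessLength h w := by
  have hsplit := Finset.card_filter_add_card_filter_not
    (s := S h) (p := fun p => w p.2 < w p.1)
  have hneg : ((S h).filter fun p => ¬ w p.2 < w p.1) =
      ((S h).filter fun p => (Fin.revPerm * w : Equiv.Perm (Fin n)) p.2 <
        (Fin.revPerm * w : Equiv.Perm (Fin n)) p.1) := by
    refine Finset.filter_congr fun p hp => ?_
    simp only [S, Finset.mem_filter] at hp
    have hne : w p.1 ≠ w p.2 := fun hc => absurd (w.injective hc) (ne_of_lt hp.2.1)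
    simp only [Equiv.Perm.mul_apply, Fin.revPerm_apply, Fin.rev_lt_rev]
    constructor
    · intro hnl; exact lt_of_le_of_ne (le_of_not_gt hnl) hne
    · intro hl; exact not_lt.2 (le_of_lt hl)
  rw [hneg] at hsplit
  rw [hessLength_eq h w] at *
  rw [hessLength_eq h (Fin.revPerm * w)]
  omega

lemma hessLength_one : hessLength h 1 = 0 := by
  rw [hessLength_eq]
  refine Finset.card_eq_zero.2 (Finset.filter_eq_empty_iff.2 fun p hp => ?_)
  simp only [S, Finset.mem_filter] at hp
  simp only [Equiv.Perm.one_apply]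
  exact not_lt.2 (le_of_lt hp.2.1)

lemma hessLength_revPerm : hessLength h (Fin.revPerm : Equiv.Perm (Fin n)) = (S h).card := by
  have := key h 1
  rw [hessLength_one, mul_one] at this
  omega

lemma coeff_eq (k : ℕ) :
    (∑ w : Equiv.Perm (Fin n), (X : ℤ[X]) ^ hessLength h w).coeff k =
      ((Finset.univ.filter fun w : Equiv.Perm (Fin n) => hessLength h w = k).card : ℤ) := by
  rw [Polynomial.finset_sum_coeff]
  simp only [Polynomial.coeff_X_pow]
  rw [Finset.card_filter]
  push_cast
  exact Finset.sum_congr rfl fun w _ => by simp [eq_comm]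

end HessAux

/-- For any Hessenberg function `h`, the polynomial `Σ_{w ∈ S_n} q^{ℓ_h(w)}` is a
palindromic polynomial of degree `m = Σ_j (h(j) − j)`: its coefficient of `q^k` equals
its coefficient of `q^{m−k}` for all `k ≤ m` (and `m` is its degree). -/
theorem sum_q_pow_hessLength_palindromic (n : ℕ) (h : Fin n → Fin n)
    (hmono : Monotone h) (hge : ∀ j, j ≤ h j) :
    (∑ w : Equiv.Perm (Fin n), (X : ℤ[X]) ^ hessLength h w).natDegree =
        ∑ j : Fin n, ((h j : ℕ) - (j : ℕ)) ∧
    ∀ k ≤ ∑ j : Fin n, ((h j : ℕ) - (j : ℕ)),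
      (∑ w : Equiv.Perm (Fin n), (X : ℤ[X]) ^ hessLength h w).coeff k =
        (∑ w : Equiv.Perm (Fin n), (X : ℤ[X]) ^ hessLength h w).coeff
          ((∑ j : Fin n, ((h j : ℕ) - (j : ℕ))) - k) := by
  have hm : (HessAux.S h).card = ∑ j : Fin n, ((h j : ℕ) - (j : ℕ)) := HessAux.card_S h
  set m := ∑ j : Fin n, ((h j : ℕ) - (j : ℕ)) with hmdef
  constructor
  · apply Polynomial.natDegree_eq_of_le_of_coeff_ne_zero
    · refine (Polynomial.natDegree_sum_le _ _).trans ?_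
      refine (Finset.fold_max_le _).2 ⟨Nat.zero_le _, fun w _ => ?_⟩
      simpa [Polynomial.natDegree_X_pow] using hm ▸ HessAux.hessLength_le h w
    · rw [HessAux.coeff_eq]
      have hmem : (Fin.revPerm : Equiv.Perm (Fin n)) ∈
          Finset.univ.filter fun w : Equiv.Perm (Fin n) => hessLength h w = m := by
        simp [HessAux.hessLength_revPerm, hm]
      have := Finset.card_pos.2 ⟨_, hmem⟩
      exact_mod_cast this.ne'
  · intro k hk
    rw [HessAux.coeff_eq, HessAux.coeff_eq]
    congr 1
    apply Finset.card_bij (fun w _ => Fin.revPerm * w)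
    · intro w hw
      simp only [Finset.mem_filter, Finset.mem_univ, true_and] at hw ⊢
      rw [HessAux.key, hw, hm]
    · intro a _ b _ hab
      exact mul_left_cancel hab
    · intro w hw
      simp only [Finset.mem_filter, Finset.mem_univ, true_and] at hw
      refine ⟨Fin.revPerm⁻¹ * w, ?_, by group⟩
      simp only [Finset.mem_filter, Finset.mem_univ, true_and]
      have h1 := HessAux.key h (Fin.revPerm⁻¹ * w)
      rw [← mul_assoc, mul_inv_cancel, one_mul] at h1
      have h2 := HessAux.hessLength_le h (Fin.revPerm⁻¹ * w)
      omega
end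

section
/- For n = 3, the ideal of ℚ[x₁,x₂,x₃] generated by f_{3,1} = (x₁−x₂)(x₁−x₃)x₁, f_{3,2} = (x₁−x₃)x₁ + (x₂−x₃)x₂, and f_{3,3} = x₁+x₂+x₃ equals the ideal generated by the elementary symmetric polynomials e₁, e₂, e₃ in x₁, x₂, x₃. -/
open MvPolynomial

private lemma mem_span_triple {R : Type*} [CommRing R] {a b c g : R} (p q r : R)
    (h : g = p * a + q * b + r * c) : g ∈ Ideal.span ({a, b, c} : Set R) := by
  have ha : a ∈ Ideal.span ({a, b, c} : Set R) := Ideal.subset_span (by simp)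
  have hb : b ∈ Ideal.span ({a, b, c} : Set R) := Ideal.subset_span (by simp)
  have hc : c ∈ Ideal.span ({a, b, c} : Set R) := Ideal.subset_span (by simp)
  rw [h]
  exact Ideal.add_mem _ (Ideal.add_mem _ (Ideal.mul_mem_left _ _ ha)
    (Ideal.mul_mem_left _ _ hb)) (Ideal.mul_mem_left _ _ hc)

/-- In `ℚ[x₁,x₂,x₃]`, the ideal `(f_{3,1}, f_{3,2}, f_{3,3})` with
`f_{3,1} = (x₁−x₂)(x₁−x₃)x₁`, `f_{3,2} = (x₁−x₃)x₁ + (x₂−x₃)x₂`,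
`f_{3,3} = x₁+x₂+x₃` equals the ideal `(e₁, e₂, e₃)` generated by the elementary
symmetric polynomials. -/
theorem ideal_f_eq_ideal_elementarySymmetric :
    Ideal.span ({(X 0 - X 1) * (X 0 - X 2) * X 0,
        (X 0 - X 2) * X 0 + (X 1 - X 2) * X 1,
        X 0 + X 1 + X 2} : Set (MvPolynomial (Fin 3) ℚ)) =
      Ideal.span ({X 0 + X 1 + X 2,
        X 0 * X 1 + X 0 * X 2 + X 1 * X 2,
        X 0 * X 1 * X 2} : Set (MvPolynomial (Fin 3) ℚ)) := by
  have hhalf : (C (1/2 : ℚ) : MvPolynomial (Fin 3) ℚ) * 2 = 1 := by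
    rw [(map_ofNat (C : ℚ →+* MvPolynomial (Fin 3) ℚ) 2).symm, ← C_mul]
    norm_num
  have hthird : (C (1/3 : ℚ) : MvPolynomial (Fin 3) ℚ) * 3 = 1 := by
    rw [(map_ofNat (C : ℚ →+* MvPolynomial (Fin 3) ℚ) 3).symm, ← C_mul]
    norm_num
  apply le_antisymm <;> rw [Ideal.span_le] <;> intro g hg <;>
    simp only [Set.mem_insert_iff, Set.mem_singleton_iff] at hg <;>
    rcases hg with rfl | rfl | rfl
  · -- f1 ∈ (e1,e2,e3)
    exact mem_span_triple ((X 0)^2) (-(2 * X 0)) 3 (by ring)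
  · -- f2
    exact mem_span_triple (X 0 + X 1 + X 2 - X 2) (-2) 0 (by ring)
  · -- f3 = e1
    exact Ideal.subset_span (by simp)
  · -- e1 = f3
    exact Ideal.subset_span (by simp)
  · -- e2
    have h2 : (2 : MvPolynomial (Fin 3) ℚ) * (X 0 * X 1 + X 0 * X 2 + X 1 * X 2) ∈
        Ideal.span ({(X 0 - X 1) * (X 0 - X 2) * X 0,
          (X 0 - X 2) * X 0 + (X 1 - X 2) * X 1,
          X 0 + X 1 + X 2} : Set (MvPolynomial (Fin 3) ℚ)) :=
      mem_span_triple 0 (-1) (X 0 + X 1 + X 2 - X 2) (by ring)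
    have := Ideal.mul_mem_left _ (C (1/2 : ℚ)) h2
    rwa [← mul_assoc, hhalf, one_mul] at this
  · -- e3
    have h3 : (3 : MvPolynomial (Fin 3) ℚ) * (X 0 * X 1 * X 2) ∈
        Ideal.span ({(X 0 - X 1) * (X 0 - X 2) * X 0,
          (X 0 - X 2) * X 0 + (X 1 - X 2) * X 1,
          X 0 + X 1 + X 2} : Set (MvPolynomial (Fin 3) ℚ)) :=
      mem_span_triple 1 (-(X 0)) (X 0 * ((X 0 + X 1 + X 2) - X 2) - (X 0)^2) (by ring)
    have := Ideal.mul_mem_left _ (C (1/3 : ℚ)) h3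
    rwa [← mul_assoc, hthird, one_mul] at this
end

section
/- For the ideal arrangement A_h with h = (2,3,3) in V = {(x₁,x₂,x₃) ∈ ℝ³ : x₁+x₂+x₃ = 0}, consisting of the hyperplanes {x₁ = x₂} and {x₂ = x₃}, the ideal 𝔞(h) = {θ(Q) : θ ∈ D(A_h)} ⊂ Sym(V*) with Q = x₁²+x₂²+x₃² equals the ideal generated by (the images in Sym(V*) of) f_{2,1} = (x₁−x₂)x₁, f_{3,2} = (x₁−x₃)x₁+(x₂−x₃)x₂, and f_{3,3} = x₁+x₂+x₃. -/
open MvPolynomial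

/-- The linear relation ideal `(x₁+x₂+x₃)`. -/
noncomputable def relI : Ideal (MvPolynomial (Fin 3) ℝ) :=
  Ideal.span {(X 0 + X 1 + X 2 : MvPolynomial (Fin 3) ℝ)}

/-- The coordinate ring `R = Sym(V*) ≅ ℝ[x₁,x₂,x₃]/(x₁+x₂+x₃)`. -/
noncomputable abbrev SymV : Type := MvPolynomial (Fin 3) ℝ ⧸ relI

/-- The image of `x_i` in `R`. -/
noncomputable def xx (i : Fin 3) : SymV := Ideal.Quotient.mk relI (X i)

/-- `θ` belongs to the logarithmic derivation module `D(A_h)` of the ideal arrangement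
`A_h = {x₁ = x₂, x₂ = x₃}` for `h = (2,3,3)`. -/
def memD (θ : Derivation ℝ SymV SymV) : Prop :=
  θ (xx 0 - xx 1) ∈ Ideal.span {xx 0 - xx 1} ∧
  θ (xx 1 - xx 2) ∈ Ideal.span {xx 1 - xx 2}

lemma smul_mk' (p n : MvPolynomial (Fin 3) ℝ) :
    p • (Ideal.Quotient.mk relI n) = Ideal.Quotient.mk relI (p * n) := by
  rw [← Ideal.Quotient.mk_eq_mk, ← Ideal.Quotient.mk_eq_mk, ← Submodule.Quotient.mk_smul,
    smul_eq_mul]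

lemma smul_mk (p : MvPolynomial (Fin 3) ℝ) (m : SymV) :
    p • m = Ideal.Quotient.mk relI p * m := by
  obtain ⟨n, rfl⟩ := Ideal.Quotient.mk_surjective m
  rw [smul_mk', map_mul]

lemma sum_xx : xx 0 + xx 1 + xx 2 = 0 := by
  have h : Ideal.Quotient.mk relI (X 0 + X 1 + X 2) = 0 :=
    Ideal.Quotient.eq_zero_iff_mem.2 (Ideal.subset_span rfl)
  simpa [xx, map_add] using h

/-- The derivation of `MvPolynomial (Fin 3) ℝ` with values in `SymV` sending `X i` to
`![a,b,c] i`. -/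
noncomputable def pder (a b c : SymV) : Derivation ℝ (MvPolynomial (Fin 3) ℝ) SymV :=
  MvPolynomial.mkDerivation ℝ ![a, b, c]

lemma pder_ker (a b c : SymV) (h : a + b + c = 0) :
    relI.restrictScalars ℝ ≤ LinearMap.ker (pder a b c).toLinearMap := by
  intro x hx
  have hx' : x ∈ relI := hx
  obtain ⟨y, rfl⟩ := Ideal.mem_span_singleton.mp hx'
  have hσ : pder a b c (X 0 + X 1 + X 2) = 0 := by
    simp [pder, map_add, MvPolynomial.mkDerivation_X, h]
  simp only [LinearMap.mem_ker, Derivation.coeFn_coe]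
  rw [Derivation.leibniz, hσ, smul_zero, add_zero, smul_mk]
  have hz : Ideal.Quotient.mk relI (X 0 + X 1 + X 2) = 0 :=
    Ideal.Quotient.eq_zero_iff_mem.2 (Ideal.subset_span rfl)
  rw [hz, zero_mul]

/-- The induced derivation on the quotient ring `SymV`. -/
noncomputable def qder (a b c : SymV) (h : a + b + c = 0) : Derivation ℝ SymV SymV where
  toLinearMap :=
    (Submodule.liftQ (relI.restrictScalars ℝ) (pder a b c).toLinearMap (pder_ker a b c h)) ∘ₗ
      (Submodule.Quotient.restrictScalarsEquiv ℝ relI).symm.toLinearMap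
  map_one_eq_zero' := by
    have : (1 : SymV) = Ideal.Quotient.mk relI 1 := rfl
    show _ = (0 : SymV)
    rw [this]
    show pder a b c 1 = 0
    exact (pder a b c).map_one_eq_zero
  leibniz' := by
    intro x y
    obtain ⟨p, rfl⟩ := Ideal.Quotient.mk_surjective (I := relI) x
    obtain ⟨q, rfl⟩ := Ideal.Quotient.mk_surjective (I := relI) y
    show pder a b c (p * q) =
      Ideal.Quotient.mk relI p • (pder a b c q : SymV) +
        Ideal.Quotient.mk relI q • (pder a b c p : SymV)
    rw [smul_eq_mul, smul_eq_mul, Derivation.leibniz, smul_mk, smul_mk]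

lemma qder_mk (a b c : SymV) (h : a + b + c = 0) (p : MvPolynomial (Fin 3) ℝ) :
    qder a b c h (Ideal.Quotient.mk relI p) = pder a b c p := rfl

lemma qder_xx (a b c : SymV) (h : a + b + c = 0) (i : Fin 3) :
    qder a b c h (xx i) = ![a, b, c] i := by
  rw [xx, qder_mk, pder, MvPolynomial.mkDerivation_X]

lemma derQ (θ : Derivation ℝ SymV SymV) (p q : SymV)
    (h1 : θ (xx 0 - xx 1) = (xx 0 - xx 1) * p)
    (h2 : θ (xx 1 - xx 2) = (xx 1 - xx 2) * q) :
    θ (xx 0 ^ 2 + xx 1 ^ 2 + xx 2 ^ 2) =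
      (2 * p) * ((xx 0 - xx 1) * xx 0) + (2 * q) * ((xx 0 + xx 1) * (xx 1 - xx 2)) := by
  have hσ : xx 0 + xx 1 + xx 2 = 0 := sum_xx
  have h1' : θ (xx 0) - θ (xx 1) = (xx 0 - xx 1) * p := by simpa [map_sub] using h1
  have h2' : θ (xx 1) - θ (xx 2) = (xx 1 - xx 2) * q := by simpa [map_sub] using h2
  have hQ : θ (xx 0 ^ 2 + xx 1 ^ 2 + xx 2 ^ 2) =
      2 * xx 0 * θ (xx 0) + 2 * xx 1 * θ (xx 1) + 2 * xx 2 * θ (xx 2) := by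
    rw [map_add, map_add, pow_two, pow_two, pow_two, Derivation.leibniz, Derivation.leibniz,
      Derivation.leibniz, smul_eq_mul, smul_eq_mul, smul_eq_mul]
    ring
  rw [hQ]
  linear_combination (2 * xx 0) * h1' + (2 * (xx 0 + xx 1)) * h2' + (2 * θ (xx 2)) * hσ

lemma span_eq :
    Ideal.span ({(xx 0 - xx 1) * xx 0,
        (xx 0 - xx 2) * xx 0 + (xx 1 - xx 2) * xx 1,
        xx 0 + xx 1 + xx 2} : Set SymV) =
      Ideal.span ({(xx 0 - xx 1) * xx 0, (xx 0 + xx 1) * (xx 1 - xx 2)} : Set SymV) := by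
  apply le_antisymm <;> rw [Ideal.span_le] <;> intro x hx
  · simp only [Set.mem_insert_iff, Set.mem_singleton_iff] at hx
    rcases hx with rfl | rfl | rfl
    · exact Ideal.subset_span (by simp)
    · have : (xx 0 - xx 2) * xx 0 + (xx 1 - xx 2) * xx 1 =
          (xx 0 - xx 1) * xx 0 + (xx 0 + xx 1) * (xx 1 - xx 2) := by ring
      rw [this]
      exact Ideal.add_mem _ (Ideal.subset_span (by simp)) (Ideal.subset_span (by simp))
    · rw [sum_xx]; exact Ideal.zero_mem _
  · simp only [Set.mem_insert_iff, Set.mem_singleton_iff] at hx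
    rcases hx with rfl | rfl
    · exact Ideal.subset_span (by simp)
    · have : (xx 0 + xx 1) * (xx 1 - xx 2) =
          ((xx 0 - xx 2) * xx 0 + (xx 1 - xx 2) * xx 1) - (xx 0 - xx 1) * xx 0 := by ring
      rw [this]
      exact Ideal.sub_mem _ (Ideal.subset_span (by simp)) (Ideal.subset_span (by simp))

set_option maxHeartbeats 1000000 in
/-- For `h = (2,3,3)`, the ideal `𝔞(h) = {θ(Q) : θ ∈ D(A_h)}` with `Q = x₁²+x₂²+x₃²`
equals the ideal generated by `f_{2,1} = (x₁−x₂)x₁`,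
`f_{3,2} = (x₁−x₃)x₁+(x₂−x₃)x₂` and `f_{3,3} = x₁+x₂+x₃` in `R = Sym(V*)`. -/
theorem ideal_a_h_eq_span_f :
    {r : SymV | ∃ θ : Derivation ℝ SymV SymV,
        memD θ ∧ θ (xx 0 ^ 2 + xx 1 ^ 2 + xx 2 ^ 2) = r} =
      (Ideal.span ({(xx 0 - xx 1) * xx 0,
          (xx 0 - xx 2) * xx 0 + (xx 1 - xx 2) * xx 1,
          xx 0 + xx 1 + xx 2} : Set SymV) : Set SymV) := by
  ext r
  simp only [Set.mem_setOf_eq, SetLike.mem_coe]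
  constructor
  · rintro ⟨θ, ⟨hθ1, hθ2⟩, rfl⟩
    obtain ⟨p, hp⟩ := Ideal.mem_span_singleton.mp hθ1
    obtain ⟨q, hq⟩ := Ideal.mem_span_singleton.mp hθ2
    rw [derQ θ p q hp hq]
    have hf1 : (xx 0 - xx 1) * xx 0 ∈ Ideal.span ({(xx 0 - xx 1) * xx 0,
        (xx 0 - xx 2) * xx 0 + (xx 1 - xx 2) * xx 1, xx 0 + xx 1 + xx 2} : Set SymV) :=
      Ideal.subset_span (by simp)
    have hg : (xx 0 + xx 1) * (xx 1 - xx 2) ∈ Ideal.span ({(xx 0 - xx 1) * xx 0,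
        (xx 0 - xx 2) * xx 0 + (xx 1 - xx 2) * xx 1, xx 0 + xx 1 + xx 2} : Set SymV) := by
      have : (xx 0 + xx 1) * (xx 1 - xx 2) =
          ((xx 0 - xx 2) * xx 0 + (xx 1 - xx 2) * xx 1) - (xx 0 - xx 1) * xx 0 := by ring
      rw [this]
      exact Ideal.sub_mem _ (Ideal.subset_span (by simp)) hf1
    exact Ideal.add_mem _ (Ideal.mul_mem_left _ _ hf1) (Ideal.mul_mem_left _ _ hg)
  · intro hr
    rw [span_eq] at hr
    obtain ⟨u, v, huv⟩ := Ideal.mem_span_pair.mp hr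
    set s : SymV := xx 0 - xx 1 with hs_def
    set t : SymV := xx 1 - xx 2 with ht_def
    have hh2 : (algebraMap ℝ SymV (1/2)) * 2 = 1 := by
      rw [show ((2 : SymV)) = algebraMap ℝ SymV 2 from (map_ofNat _ 2).symm, ← map_mul]
      norm_num
    have hh3 : (algebraMap ℝ SymV (1/3)) * 3 = 1 := by
      rw [show ((3 : SymV)) = algebraMap ℝ SymV 3 from (map_ofNat _ 3).symm, ← map_mul]
      norm_num
    set i3 : SymV := algebraMap ℝ SymV (1/3) with hi3
    set p : SymV := algebraMap ℝ SymV (1/2) * u with hp_def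
    set q : SymV := algebraMap ℝ SymV (1/2) * v with hq_def
    set a : SymV := i3 * (2 * (s * p) + t * q) with ha
    set b : SymV := i3 * (t * q - s * p) with hb
    set c : SymV := i3 * (-(s * p) - 2 * (t * q)) with hc
    have hsum : a + b + c = 0 := by rw [ha, hb, hc]; ring
    refine ⟨qder a b c hsum, ⟨?_, ?_⟩, ?_⟩
    · rw [map_sub, qder_xx, qder_xx]
      have : (![a, b, c] 0 : SymV) - ![a, b, c] 1 = s * p := by
        simp only [Matrix.cons_val_zero, Matrix.cons_val_one, Matrix.head_cons, ha, hb]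
        linear_combination (s * p) * hh3
      rw [this, ← hs_def]
      exact Ideal.mem_span_singleton.mpr ⟨p, rfl⟩
    · rw [map_sub, qder_xx, qder_xx]
      have : (![a, b, c] 1 : SymV) - ![a, b, c] 2 = t * q := by
        simp only [Matrix.cons_val_one, Matrix.head_cons, ha, hb, hc]
        show i3 * (t * q - s * p) - i3 * (-(s * p) - 2 * (t * q)) = t * q
        linear_combination (t * q) * hh3
      rw [this, ← ht_def]
      exact Ideal.mem_span_singleton.mpr ⟨q, rfl⟩
    · have h1 : (qder a b c hsum) (xx 0 - xx 1) = (xx 0 - xx 1) * p := by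
        rw [map_sub, qder_xx, qder_xx]
        simp only [Matrix.cons_val_zero, Matrix.cons_val_one, Matrix.head_cons, ha, hb]
        rw [← hs_def]
        linear_combination (s * p) * hh3
      have h2 : (qder a b c hsum) (xx 1 - xx 2) = (xx 1 - xx 2) * q := by
        rw [map_sub, qder_xx, qder_xx]
        have : (![a, b, c] 1 : SymV) - ![a, b, c] 2 = t * q := by
          simp only [Matrix.cons_val_one, Matrix.head_cons, ha, hb, hc]
          show i3 * (t * q - s * p) - i3 * (-(s * p) - 2 * (t * q)) = t * q
          linear_combination (t * q) * hh3
        rw [this, ← ht_def]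
      rw [derQ _ p q h1 h2]
      linear_combination huv + (u * (s * xx 0) + v * ((xx 0 + xx 1) * t)) * hh2
end

section
/- The derivations ψ_{i,j} = Σ_{k=1}^{j} (∏_{ℓ=j+1}^{i} (x_k − x_ℓ))·(∂/∂x_k − (1/n)·(∂/∂x₁+...+∂/∂x_n)) satisfy ψ_{i,j}(x₁² + ... + x_n²) = 2·f_{i,j} in the ring R = ℝ[x₁,...,x_n]/(x₁+...+x_n), where f_{i,j} = Σ_{k=1}^{j} (∏_{ℓ=j+1}^{i} (x_k − x_ℓ)) x_k. -/
open MvPolynomial Finset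

/-- The polynomial `f_{i,j} = Σ_{k≤j} (Π_{j<ℓ≤i} (x_k − x_ℓ)) x_k` (0-indexed). -/
noncomputable def fpoly {n : ℕ} (i j : Fin n) : MvPolynomial (Fin n) ℝ :=
  ∑ k ∈ Finset.Iic j, (∏ l ∈ Finset.Ioc j i, (X k - X l)) * X k

/-- The derivation
`ψ_{i,j} = Σ_{k≤j} (Π_{j<ℓ≤i} (x_k − x_ℓ)) (∂/∂x_k − (1/n)(∂/∂x₁+⋯+∂/∂x_n))`
(0-indexed). -/
noncomputable def psi {n : ℕ} (i j : Fin n) :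
    Derivation ℝ (MvPolynomial (Fin n) ℝ) (MvPolynomial (Fin n) ℝ) :=
  ∑ k ∈ Finset.Iic j, (∏ l ∈ Finset.Ioc j i, (X k - X l) : MvPolynomial (Fin n) ℝ) •
    ((pderiv k : Derivation ℝ (MvPolynomial (Fin n) ℝ) (MvPolynomial (Fin n) ℝ)) -
      ((n : ℝ)⁻¹) •
        ∑ l : Fin n,
          (pderiv l : Derivation ℝ (MvPolynomial (Fin n) ℝ) (MvPolynomial (Fin n) ℝ)))

lemma derivation_sum_apply {ι R A M : Type*} [CommSemiring R] [CommSemiring A] [Algebra R A]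
    [AddCommMonoid M] [Module R M] [Module A M] (s : Finset ι) (D : ι → Derivation R A M)
    (a : A) : (∑ k ∈ s, D k) a = ∑ k ∈ s, D k a := by
  classical
  induction s using Finset.cons_induction with
  | empty => rfl
  | cons k s hk ih =>
    rw [Finset.sum_cons, Finset.sum_cons, ← ih]
    exact congrFun (Derivation.coe_add _ _) a

lemma pd_sq {n : ℕ} (k : Fin n) :
    pderiv k (∑ m : Fin n, (X m : MvPolynomial (Fin n) ℝ) ^ 2) = 2 * X k := by
  rw [map_sum, Finset.sum_eq_single k]
  · simp [pderiv_X_self]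
  · intro b _ hb
    simp [pderiv_X, Pi.single_eq_of_ne hb]
  · simp

/-- `ψ_{i,j}(x₁² + ⋯ + x_n²) = 2 f_{i,j}` in `R = ℝ[x₁,…,x_n]/(x₁+⋯+x_n)`. -/
theorem psi_apply_Q_eq_two_f {n : ℕ} (i j : Fin n) (hji : j ≤ i) :
    Ideal.Quotient.mk (Ideal.span {(∑ k : Fin n, X k : MvPolynomial (Fin n) ℝ)})
        (psi i j (∑ k : Fin n, X k ^ 2)) =
      Ideal.Quotient.mk (Ideal.span {(∑ k : Fin n, X k : MvPolynomial (Fin n) ℝ)})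
        (2 * fpoly i j) := by
  rw [Ideal.Quotient.eq]
  have h : psi i j (∑ k : Fin n, X k ^ 2) - 2 * fpoly i j
      = (-((C ((n:ℝ)⁻¹) : MvPolynomial (Fin n) ℝ) * 2 *
          ∑ k ∈ Finset.Iic j, ∏ l ∈ Finset.Ioc j i, (X k - X l))) * (∑ k : Fin n, X k) := by
    simp only [psi, fpoly, derivation_sum_apply, Derivation.smul_apply, Derivation.sub_apply,
      smul_eq_mul, smul_eq_C_mul, pd_sq]
    have hinner : (∑ m : Fin n, (2 : MvPolynomial (Fin n) ℝ) * X m)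
        = 2 * ∑ m : Fin n, X m := (Finset.mul_sum _ _ _).symm
    rw [hinner]
    have hterm : ∀ x ∈ Finset.Iic j,
        (∏ l ∈ Finset.Ioc j i, (X x - X l) : MvPolynomial (Fin n) ℝ) *
            (2 * X x - C ((n:ℝ)⁻¹) * (2 * ∑ m : Fin n, X m))
        = 2 * ((∏ l ∈ Finset.Ioc j i, (X x - X l)) * X x) -
            (C ((n:ℝ)⁻¹) * 2 * ∏ l ∈ Finset.Ioc j i, (X x - X l)) * ∑ m : Fin n, X m :=
      fun x _ => by ring
    rw [Finset.sum_congr rfl hterm, Finset.sum_sub_distrib, ← Finset.mul_sum,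
      ← Finset.sum_mul, ← Finset.mul_sum]
    ring
  rw [h]
  exact Ideal.mul_mem_left _ _ (Ideal.subset_span rfl)
end
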